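/- Let A be a unital C*-algebra which is monotone σ-complete. Then A is a Rickart C*-algebra. -/

import Mathlib

namespace MSCRickart

variable {A : Type*} [CStarAlgebra A] [PartialOrder A] [StarOrderedRing A]

/-- `s` is the least self-adjoint upper bound of the sequence `a`. -/
def SupOf (a : ℕ → A) (s : A) : Prop :=
  star s = s ∧ (∀ n, a n ≤ s) ∧ ∀ x : A, star x = x → (∀ n, a n ≤ x) → s ≤ x

lemma SupOf.unique {a : ℕ → A} {s t : A} (hs : SupOf a s) (ht : SupOf a t) : s = t :=
  le_antisymm (hs.2.2 t ht.1 ht.2.1) (ht.2.2 s hs.1 hs.2.1)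

lemma supOf_zero : SupOf (fun _ : ℕ => (0 : A)) 0 :=
  ⟨star_zero A, fun _ => le_rfl, fun x _ h => h 0⟩

lemma smul_conj (r : ℂ) (w : A) :
    star ((r : ℂ) • (1 : A)) * w * ((r : ℂ) • (1 : A)) = (star r * r) • w := by
  rw [star_smul, star_one, smul_mul_assoc, one_mul, mul_smul_comm, mul_one, smul_smul, mul_comm]

lemma le_of_add_le_add {x y : A} (h : x + x ≤ y + y) : x ≤ y := by
  have h0 : (0 : A) ≤ (y - x) + (y - x) := by
    rw [← sub_nonneg] at h
    calc (0 : A) ≤ y + y - (x + x) := h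
    _ = (y - x) + (y - x) := by abel
  set r : ℂ := ((Real.sqrt 2⁻¹ : ℝ) : ℂ) with hr
  have key : (0 : A) ≤ star (r • (1 : A)) * ((y - x) + (y - x)) * (r • (1 : A)) :=
    star_left_conjugate_nonneg h0 _
  rw [smul_conj] at key
  have hrr : star r * r = (2⁻¹ : ℂ) := by
    rw [hr, Complex.star_def, Complex.conj_ofReal, ← Complex.ofReal_mul,
      Real.mul_self_sqrt (by norm_num)]
    norm_num
  rw [hrr] at key
  have : (2⁻¹ : ℂ) • ((y - x) + (y - x)) = y - x := by
    rw [smul_add, ← add_smul]; norm_num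
  rw [this] at key
  exact sub_nonneg.mp key

lemma supOf_add {a b : ℕ → A} {s t : A} (hs : SupOf a s) (ht : SupOf b t)
    (hbsa : ∀ n, star (b n) = b n) (hma : Monotone a) (hmb : Monotone b) :
    SupOf (fun n => a n + b n) (s + t) := by
  refine ⟨by rw [star_add, hs.1, ht.1], fun n => add_le_add (hs.2.1 n) (ht.2.1 n), ?_⟩
  intro x hx hub
  have hs_le : ∀ m, s ≤ x - b m := by
    intro m
    refine hs.2.2 _ (by rw [star_sub, hx, hbsa m]) (fun n => ?_)
    rw [le_sub_iff_add_le]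
    calc a n + b m ≤ a (max n m) + b (max n m) :=
          add_le_add (hma (le_max_left n m)) (hmb (le_max_right n m))
      _ ≤ x := hub (max n m)
  have ht_le : t ≤ x - s := by
    refine ht.2.2 _ (by rw [star_sub, hx, hs.1]) (fun m => ?_)
    rw [le_sub_iff_add_le, add_comm, ← le_sub_iff_add_le]
    exact hs_le m
  calc s + t ≤ s + (x - s) := add_le_add_right ht_le s
    _ = x := by abel

lemma conj_conj_cancel (u : Aˣ) (y : A) :
    star ((u⁻¹ : Aˣ) : A) * (star (u : A) * y * (u : A)) * ((u⁻¹ : Aˣ) : A) = y := by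
  have h1 : (u : A) * ((u⁻¹ : Aˣ) : A) = 1 := u.mul_inv
  calc star ((u⁻¹ : Aˣ) : A) * (star (u : A) * y * (u : A)) * ((u⁻¹ : Aˣ) : A)
      = star ((u : A) * ((u⁻¹ : Aˣ) : A)) * y * ((u : A) * ((u⁻¹ : Aˣ) : A)) := by
        simp only [star_mul, mul_assoc]
    _ = y := by rw [h1, star_one, one_mul, mul_one]

lemma supOf_conj_isUnit {a : ℕ → A} {s : A} (h : SupOf a s) {v : A} (hv : IsUnit v) :
    SupOf (fun n => star v * a n * v) (star v * s * v) := by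
  obtain ⟨u, rfl⟩ := hv
  refine ⟨by rw [star_mul, star_mul, star_star, h.1, mul_assoc],
    fun n => star_left_conjugate_le_conjugate (h.2.1 n) _, ?_⟩
  intro x hx hub
  have h2 : ∀ n, a n ≤ star ((u⁻¹ : Aˣ) : A) * x * ((u⁻¹ : Aˣ) : A) := fun n => by
    have := star_left_conjugate_le_conjugate (hub n) ((u⁻¹ : Aˣ) : A)
    rwa [conj_conj_cancel] at this
  have h3 : s ≤ star ((u⁻¹ : Aˣ) : A) * x * ((u⁻¹ : Aˣ) : A) :=
    h.2.2 _ (by rw [star_mul, star_mul, star_star, hx, mul_assoc]) h2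
  have h4 := star_left_conjugate_le_conjugate h3 (u : A)
  have h5 := conj_conj_cancel u⁻¹ x
  rw [inv_inv] at h5
  rwa [h5] at h4

lemma supOf_conj {a : ℕ → A} {s : A} (h : SupOf a s)
    (hasa : ∀ n, star (a n) = a n) (hma : Monotone a) (z : A) :
    SupOf (fun n => star z * a n * z) (star z * s * z) := by
  set t : ℝ := ‖z‖ + 1 with hts
  have ht0 : (0 : ℝ) < t := by positivity
  have htne : ((t : ℂ)) ≠ 0 := by
    simp only [ne_eq, Complex.ofReal_eq_zero]
    exact ne_of_gt ht0
  set T : A := algebraMap ℂ A ((t : ℝ) : ℂ) with hT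
  have hTstar : star T = T := by
    rw [hT, ← algebraMap_star_comm, Complex.star_def, Complex.conj_ofReal]
  have hTmul : ∀ x : A, T * ((t : ℂ)⁻¹ • x) = x := by
    intro x
    rw [hT, ← Algebra.smul_def, smul_smul, mul_inv_cancel₀ htne, one_smul]
  have hnorm : ‖(t : ℂ)⁻¹ • z‖ < 1 := by
    rw [norm_smul, norm_inv, Complex.norm_real, Real.norm_eq_abs, abs_of_pos ht0]
    rw [inv_mul_lt_iff₀ ht0, mul_one, hts]
    linarith
  have hv : IsUnit (z + T) := by
    have hu1 : IsUnit (1 - (-((t : ℂ)⁻¹ • z))) := ⟨Units.oneSub _ (by rwa [norm_neg]), rfl⟩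
    have : z + T = T * (1 - (-((t : ℂ)⁻¹ • z))) := by
      rw [mul_sub, mul_one, mul_neg, hTmul, sub_neg_eq_add, add_comm]
    rw [this]
    exact (IsUnit.map (algebraMap ℂ A) (Ne.isUnit htne)).mul hu1
  have hw : IsUnit (z - T) := by
    have hu1 : IsUnit (1 - ((t : ℂ)⁻¹ • z)) := ⟨Units.oneSub _ hnorm, rfl⟩
    have : z - T = (-T) * (1 - ((t : ℂ)⁻¹ • z)) := by
      rw [neg_mul, mul_sub, mul_one, hTmul, neg_sub, sub_eq_add_neg, add_comm]
    rw [this]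
    exact ((IsUnit.map (algebraMap ℂ A) (Ne.isUnit htne)).neg).mul hu1
  have S1 := supOf_conj_isUnit h hv
  have S2 := supOf_conj_isUnit h hw
  -- monotonicity and selfadjointness of the conjugated sequences
  have mono1 : Monotone (fun n => star (z + T) * a n * (z + T)) :=
    fun m n hmn => star_left_conjugate_le_conjugate (hma hmn) _
  have mono2 : Monotone (fun n => star (z - T) * a n * (z - T)) :=
    fun m n hmn => star_left_conjugate_le_conjugate (hma hmn) _
  have sa2 : ∀ n, star (star (z - T) * a n * (z - T)) = star (z - T) * a n * (z - T) :=
    fun n => by rw [star_mul, star_mul, star_star, hasa n, mul_assoc]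
  have Ssum := supOf_add S1 S2 sa2 mono1 mono2
  -- the key algebraic identity
  have key : ∀ x : A, star (z + T) * x * (z + T) + star (z - T) * x * (z - T)
      = (star z * x * z + star z * x * z) + (star T * x * T + star T * x * T) := by
    intro x
    rw [star_add, star_sub, hTstar]
    noncomm_ring
  refine ⟨by rw [star_mul, star_mul, star_star, h.1, mul_assoc],
    fun n => star_left_conjugate_le_conjugate (h.2.1 n) _, ?_⟩
  intro x hx hub
  have hub' : ∀ n, star (z + T) * a n * (z + T) + star (z - T) * a n * (z - T)
      ≤ (x + x) + (star T * s * T + star T * s * T) := by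
    intro n
    rw [key (a n)]
    have h1 : star T * a n * T ≤ star T * s * T := star_left_conjugate_le_conjugate (h.2.1 n) T
    exact add_le_add (add_le_add (hub n) (hub n)) (add_le_add h1 h1)
  have hsa : star ((x + x) + (star T * s * T + star T * s * T))
      = (x + x) + (star T * s * T + star T * s * T) := by
    have : star (star T * s * T) = star T * s * T := by
      rw [star_mul, star_mul, star_star, h.1, mul_assoc]
    rw [star_add, star_add, star_add, hx, this]
  have hle := Ssum.2.2 _ hsa hub'
  rw [key s] at hle
  have hle2 : star z * s * z + star z * s * z ≤ x + x := le_of_add_le_add_right hle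
  exact le_of_add_le_add hle2



end MSCRickart

open MSCRickart in
/-- A unital C*-algebra which is monotone σ-complete (every norm-bounded monotone
increasing sequence of self-adjoint elements has a supremum among the self-adjoint
elements) is a Rickart C*-algebra. -/
theorem rickart_of_monotone_sigma_complete {A : Type*} [NormedRing A] [StarRing A]
    [CStarRing A] [CompleteSpace A] [NormedAlgebra ℂ A] [StarModule ℂ A]
    [PartialOrder A] [StarOrderedRing A]
    (hmsc : ∀ a : ℕ → A, (∀ n, star (a n) = a n) → Monotone a →
      (∃ c : ℝ, ∀ n, ‖a n‖ ≤ c) →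
      ∃ b : A, star b = b ∧ (∀ n, a n ≤ b) ∧
        ∀ x : A, star x = x → (∀ n, a n ≤ x) → b ≤ x) :
    ∀ a : A, ∃ p : A, star p = p ∧ p * p = p ∧
      {z : A | a * z = 0} = Set.range (fun z => p * z) := by
  letI : CStarAlgebra A :=
    { ‹NormedRing A›, ‹StarRing A›, ‹CStarRing A›, ‹CompleteSpace A›,
      ‹NormedAlgebra ℂ A›, ‹StarModule ℂ A› with }
  rcases subsingleton_or_nontrivial A with hsub | hnt
  · intro a
    refine ⟨0, by simp, by simp, ?_⟩
    ext z
    simp only [Set.mem_setOf_eq, Set.mem_range]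
    exact ⟨fun _ => ⟨z, Subsingleton.elim _ _⟩, fun _ => Subsingleton.elim _ _⟩
  intro a
  set c : A := star a * a with hc
  have hc0 : (0 : A) ≤ c := star_mul_self_nonneg a
  have hcsa : IsSelfAdjoint c := IsSelfAdjoint.of_nonneg hc0
  have hspec : ∀ x ∈ spectrum ℝ c, (0 : ℝ) ≤ x := fun x hx =>
    spectrum_nonneg_of_nonneg hc0 hx
  -- the approximating functions
  set f : ℕ → ℝ → ℝ := fun n t => min 1 (max 0 (2 ^ n * t - 1)) with hf
  have hf_cont : ∀ n, Continuous (f n) := by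
    intro n; simp only [hf]; fun_prop
  have hf_nonneg : ∀ n t, 0 ≤ f n t := fun n t =>
    le_min zero_le_one (le_max_left 0 _)
  have hf_le_one : ∀ n t, f n t ≤ 1 := fun n t => min_le_left _ _
  have hf_mono : ∀ {m n : ℕ}, m ≤ n → ∀ t : ℝ, 0 ≤ t → f m t ≤ f n t := by
    intro m n hmn t ht
    have h2 : (2 : ℝ) ^ m ≤ 2 ^ n := pow_le_pow_right₀ one_le_two hmn
    simp only [hf]
    apply min_le_min le_rfl
    apply max_le_max le_rfl
    nlinarith
  have hf_eq_one : ∀ {m n : ℕ}, n < m → ∀ t : ℝ, f n t ≠ 0 → f m t = 1 := by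
    intro m n hnm t hne
    have h2n : (0 : ℝ) < 2 ^ n := by positivity
    have h1 : 1 < 2 ^ n * t := by
      by_contra hcon
      push_neg at hcon
      apply hne
      simp only [hf]
      rw [max_eq_left (by linarith), min_eq_right zero_le_one]
    have ht0 : 0 < t := by nlinarith
    have h2 : (2 : ℝ) ^ n * 2 ≤ 2 ^ m := by
      calc (2 : ℝ) ^ n * 2 = 2 ^ (n + 1) := by ring
        _ ≤ 2 ^ m := pow_le_pow_right₀ one_le_two hnm
    have h3 : (2 : ℝ) ≤ 2 ^ m * t := by nlinarith
    simp only [hf]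
    rw [max_eq_right (by linarith), min_eq_left (by linarith)]
  have hf_tail : ∀ (n : ℕ) (t : ℝ), 0 ≤ t → t * (1 - f n t) ≤ 2 * (2⁻¹) ^ n := by
    intro n t ht
    have h2n : (0 : ℝ) < 2 ^ n := by positivity
    have hinv : ((2 : ℝ)⁻¹) ^ n * 2 ^ n = 1 := by
      rw [← mul_pow]; norm_num
    rcases le_or_gt (2 ^ n * t) 2 with hle | hlt
    · have h1 : t * (1 - f n t) ≤ t * 1 :=
        mul_le_mul_of_nonneg_left (by linarith [hf_nonneg n t]) ht
      have h2 : t ≤ 2 * (2⁻¹) ^ n := by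
        have h3 := mul_le_mul_of_nonneg_left hle
          (le_of_lt (by positivity : (0 : ℝ) < (2⁻¹) ^ n))
        rw [← mul_assoc, hinv, one_mul] at h3
        linarith
      linarith
    · have hone : f n t = 1 := by
        simp only [hf]
        rw [max_eq_right (by linarith), min_eq_left (by linarith)]
      rw [hone]
      simp only [sub_self, mul_zero]
      positivity
  -- the approximating elements
  set e : ℕ → A := fun n => cfc (f n) c with he
  have he_sa : ∀ n, IsSelfAdjoint (e n) := fun n => cfc_predicate (f n) c
  have he_nonneg : ∀ n, (0 : A) ≤ e n := fun n =>
    cfc_nonneg (fun x _ => hf_nonneg n x)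
  have he_le_one : ∀ n, e n ≤ 1 := by
    intro n
    simp only [he]
    calc cfc (f n) c ≤ cfc (1 : ℝ → ℝ) c :=
          cfc_mono (fun x _ => hf_le_one n x)
      _ = 1 := cfc_one ℝ c
  have he_mono : Monotone e := by
    intro m n hmn
    simp only [he]
    exact cfc_mono (fun x hx => hf_mono hmn x (hspec x hx))
  have he_norm : ∀ n, ‖e n‖ ≤ 1 := fun n =>
    (CStarAlgebra.norm_le_one_iff_of_nonneg _ (he_nonneg n)).mpr (he_le_one n)
  obtain ⟨b, hb_sa, hb_ub, hb_lub⟩ :=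
    hmsc e (fun n => (he_sa n).star_eq) he_mono ⟨1, he_norm⟩
  have hS : SupOf e b := ⟨hb_sa, hb_ub, hb_lub⟩
  have hb0 : (0 : A) ≤ b := le_trans (he_nonneg 0) (hb_ub 0)
  have hb1 : b ≤ 1 := hb_lub 1 (star_one A) he_le_one
  have h1mb : (0 : A) ≤ 1 - b := sub_nonneg.mpr hb1
  -- Step A : b * e n = e n
  have hbe : ∀ n, b * e n = e n := by
    intro n
    set r : A := cfc (fun t => Real.sqrt (f n t)) c with hr
    have hr_sa : IsSelfAdjoint r := cfc_predicate _ c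
    have hr_cont : Continuous fun t => Real.sqrt (f n t) :=
      Real.continuous_sqrt.comp (hf_cont n)
    have hrr : r * r = e n := by
      simp only [hr, he]
      rw [← cfc_mul _ _ c hr_cont.continuousOn hr_cont.continuousOn]
      exact cfc_congr (fun x _ => Real.mul_self_sqrt (hf_nonneg n x))
    have hre : r * e (n + 1) * r = e n := by
      simp only [hr, he]
      rw [← cfc_mul _ _ c hr_cont.continuousOn (hf_cont (n + 1)).continuousOn,
        ← cfc_mul (fun x => Real.sqrt (f n x) * f (n + 1) x) _ c (hr_cont.mul (hf_cont (n + 1))).continuousOn hr_cont.continuousOn]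
      apply cfc_congr
      intro x _
      show Real.sqrt (f n x) * f (n + 1) x * Real.sqrt (f n x) = f n x
      by_cases hzero : f n x = 0
      · simp [hzero]
      · rw [hf_eq_one (lt_add_one n) x hzero, mul_one,
          Real.mul_self_sqrt (hf_nonneg n x)]
    have hkey : r * ((1 : A) - e (n + 1)) * r = 0 := by
      rw [mul_sub, sub_mul, mul_one, hrr, hre, sub_self]
    have h2 : r * (1 - b) * r ≤ 0 := by
      have h3 := star_left_conjugate_le_conjugate (sub_le_sub_left (hb_ub (n + 1)) 1) r
      rw [hr_sa.star_eq] at h3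
      rwa [hkey] at h3
    have h3 : (0 : A) ≤ r * (1 - b) * r := by
      have h4 := star_left_conjugate_nonneg h1mb r
      rwa [hr_sa.star_eq] at h4
    have h4 : r * (1 - b) * r = 0 := le_antisymm h2 h3
    set q : A := CFC.sqrt (1 - b) with hq
    have hq_sa : IsSelfAdjoint q := IsSelfAdjoint.of_nonneg (CFC.sqrt_nonneg _)
    have hqq : q * q = 1 - b := CFC.sqrt_mul_sqrt_self _ h1mb
    have hqr : q * r = 0 := by
      rw [← CStarRing.star_mul_self_eq_zero_iff (q * r)]
      rw [star_mul, hq_sa.star_eq, hr_sa.star_eq]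
      calc r * q * (q * r) = r * (q * q) * r := by noncomm_ring
        _ = 0 := by rw [hqq, h4]
    have h5 : (1 - b) * r = 0 := by rw [← hqq, mul_assoc, hqr, mul_zero]
    have h6 : (1 - b) * e n = 0 := by rw [← hrr, ← mul_assoc, h5, zero_mul]
    rw [sub_mul, one_mul] at h6
    exact (sub_eq_zero.mp h6).symm
  have heb : ∀ n, e n * b = e n := by
    intro n
    have h1 := congrArg star (hbe n)
    rwa [star_mul, hb_sa, (he_sa n).star_eq] at h1
  -- Step B : b * b * b = b
  have hb3 : b * b * b = b := by
    have hSconj := supOf_conj hS (fun n => (he_sa n).star_eq) he_mono b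
    rw [hb_sa] at hSconj
    have heq : (fun n => b * e n * b) = e := by
      funext n
      rw [hbe n, heb n]
    rw [heq] at hSconj
    exact hSconj.unique hS
  -- Step C : b * b = b
  have hbb : b * b = b := by
    have hb_spec_le : ∀ x ∈ spectrum ℝ b, x ≤ 1 := by
      intro x hx
      have hnb : ‖b‖ ≤ 1 := (CStarAlgebra.norm_le_one_iff_of_nonneg b hb0).mpr hb1
      calc x ≤ |x| := le_abs_self x
        _ ≤ ‖b‖ := by
            have h5 := spectrum.norm_le_norm_of_mem hx
            simpa [Real.norm_eq_abs] using h5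
        _ ≤ 1 := hnb
    have hd0 : (0 : A) ≤ b - b * b := by
      have hb_sa' : IsSelfAdjoint b := hb_sa
      have heq2 : b - b * b = cfc (fun x : ℝ => x - x * x) b := by
        rw [cfc_sub _ _ b, cfc_mul _ _ b, cfc_id' ℝ b]
      rw [heq2]
      exact cfc_nonneg (fun x hx => by
        nlinarith [spectrum_nonneg_of_nonneg hb0 hx, hb_spec_le x hx])
    have hd_sa : star (b - b * b) = b - b * b := by
      rw [star_sub, star_mul, hb_sa]
    have hd_mul : (b - b * b) * b = -(b - b * b) := by
      have h7 : (b - b * b) * (1 + b) = 0 := by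
        have h8 : (b - b * b) * (1 + b) = b - b * b * b := by noncomm_ring
        rw [h8, hb3, sub_self]
      rw [mul_add, mul_one] at h7
      linear_combination (norm := abel) h7
    have hd1 : (0 : A) ≤ -((b - b * b) * (b - b * b)) := by
      have h9 := star_left_conjugate_nonneg hb0 (b - b * b)
      rw [hd_sa] at h9
      calc (0 : A) ≤ (b - b * b) * b * (b - b * b) := h9
        _ = -((b - b * b) * (b - b * b)) := by rw [hd_mul]; noncomm_ring
    have hd2 : (0 : A) ≤ (b - b * b) * (b - b * b) := by
      have h10 := star_mul_self_nonneg (b - b * b)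
      rwa [hd_sa] at h10
    have hd3 : (b - b * b) * (b - b * b) = 0 :=
      le_antisymm (neg_nonneg.mp hd1) hd2
    have hd4 : b - b * b = 0 := by
      rw [← CStarRing.star_mul_self_eq_zero_iff (b - b * b), hd_sa]
      exact hd3
    exact (sub_eq_zero.mp hd4).symm
  -- Step D : c * (1 - b) = 0
  set s : A := cfc Real.sqrt c with hsq
  have hs_sa : IsSelfAdjoint s := cfc_predicate _ c
  have hss : s * s = c := by
    simp only [hsq]
    rw [← cfc_mul _ _ c Real.continuous_sqrt.continuousOn Real.continuous_sqrt.continuousOn]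
    exact (cfc_congr fun x hx => Real.mul_self_sqrt (hspec x hx)).trans (cfc_id' ℝ c)
  have hsn : ∀ n, s * ((1 : A) - e n) * s = cfc (fun x => x * (1 - f n x)) c := by
    intro n
    have h1 : (1 : A) - e n = cfc (fun x => 1 - f n x) c := by
      simp only [he]
      rw [cfc_sub _ _ c, cfc_const 1 c, map_one]
    rw [h1]
    simp only [hsq]
    rw [← cfc_mul Real.sqrt (fun x => 1 - f n x) c Real.continuous_sqrt.continuousOn
        ((continuous_const.sub (hf_cont n)).continuousOn),
      ← cfc_mul (fun x => Real.sqrt x * (1 - f n x)) _ c (Real.continuous_sqrt.mul (continuous_const.sub (hf_cont n))).continuousOn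
        Real.continuous_sqrt.continuousOn]
    apply cfc_congr
    intro x hx
    show Real.sqrt x * (1 - f n x) * Real.sqrt x = x * (1 - f n x)
    rw [mul_right_comm, Real.mul_self_sqrt (hspec x hx)]
  have h_norm_tail : ∀ n, ‖s * ((1 : A) - e n) * s‖ ≤ 2 * (2⁻¹) ^ n := by
    intro n
    rw [hsn n]
    apply norm_cfc_le (by positivity)
    intro x hx
    rw [Real.norm_eq_abs, abs_of_nonneg
      (mul_nonneg (hspec x hx) (by linarith [hf_le_one n x]))]
    exact hf_tail n x (hspec x hx)
  have hsbs : s * (1 - b) * s = 0 := by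
    have h0' : (0 : A) ≤ s * (1 - b) * s := by
      have h11 := star_left_conjugate_nonneg h1mb s
      rwa [hs_sa.star_eq] at h11
    have hle : ∀ n, s * (1 - b) * s ≤ s * ((1 : A) - e n) * s := by
      intro n
      have h12 := star_left_conjugate_le_conjugate (sub_le_sub_left (hb_ub n) 1) s
      rwa [hs_sa.star_eq] at h12
    have hnorm0 : ‖s * (1 - b) * s‖ = 0 := by
      by_contra hne
      have hpos : 0 < ‖s * (1 - b) * s‖ :=
        lt_of_le_of_ne (norm_nonneg _) (Ne.symm hne)
      obtain ⟨n, hn⟩ := exists_pow_lt_of_lt_one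
        (by positivity : (0 : ℝ) < ‖s * (1 - b) * s‖ / 2)
        (by norm_num : (2⁻¹ : ℝ) < 1)
      have h13 := (CStarAlgebra.norm_le_norm_of_nonneg_of_le h0' (hle n)).trans
        (h_norm_tail n)
      linarith
    exact norm_eq_zero.mp hnorm0
  have hcb : c * (1 - b) = 0 := by
    set q : A := CFC.sqrt (1 - b) with hq
    have hq_sa : IsSelfAdjoint q := IsSelfAdjoint.of_nonneg (CFC.sqrt_nonneg _)
    have hqq : q * q = 1 - b := CFC.sqrt_mul_sqrt_self _ h1mb
    have hqs : q * s = 0 := by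
      rw [← CStarRing.star_mul_self_eq_zero_iff (q * s), star_mul, hq_sa.star_eq, hs_sa.star_eq]
      calc s * q * (q * s) = s * (q * q) * s := by noncomm_ring
        _ = 0 := by rw [hqq, hsbs]
    have h1 : (1 - b) * s = 0 := by rw [← hqq, mul_assoc, hqs, mul_zero]
    have h2 : (1 - b) * c = 0 := by rw [← hss, ← mul_assoc, h1, zero_mul]
    have h3 := congrArg star h2
    rwa [star_mul, star_zero, star_sub, star_one, hb_sa, hcsa.star_eq] at h3
  -- the auxiliary functions g with f n x = g n x * x
  set g : ℕ → ℝ → ℝ := fun n x => f n x * (max x ((2 : ℝ) ^ n)⁻¹)⁻¹ with hg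
  have hg_cont : ∀ n, Continuous (g n) := by
    intro n
    apply (hf_cont n).mul
    apply Continuous.inv₀ (continuous_id.max continuous_const)
    intro x
    exact ne_of_gt (lt_max_iff.mpr (Or.inr (by positivity)))
  have heg : ∀ n, e n = cfc (g n) c * c := by
    intro n
    have h1 : cfc (fun x => g n x * x) c = cfc (g n) c * c := by
      rw [cfc_mul (g n) (fun x : ℝ => x) c (hg_cont n).continuousOn continuous_id.continuousOn, cfc_id' ℝ c]
    rw [← h1]
    simp only [he]
    apply cfc_congr
    intro x hx
    show f n x = g n x * x
    have hx0 := hspec x hx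
    rcases le_or_gt x ((2 : ℝ) ^ n)⁻¹ with hle | hlt
    · have h2n : (0 : ℝ) < 2 ^ n := by positivity
      have hf0 : f n x = 0 := by
        simp only [hf]
        have h2 : (2 : ℝ) ^ n * x - 1 ≤ 0 := by
          have h3 : (2 : ℝ) ^ n * x ≤ 2 ^ n * ((2 : ℝ) ^ n)⁻¹ :=
            mul_le_mul_of_nonneg_left hle (le_of_lt h2n)
          rw [mul_inv_cancel₀ (ne_of_gt h2n)] at h3
          linarith
        rw [max_eq_left h2, min_eq_right zero_le_one]
      simp [hg, hf0]
    · have hmax : max x ((2 : ℝ) ^ n)⁻¹ = x := max_eq_left (le_of_lt hlt)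
      have hxne : x ≠ 0 := ne_of_gt (lt_trans (by positivity) hlt)
      simp only [hg]
      rw [hmax, mul_assoc, inv_mul_cancel₀ hxne, mul_one]
  -- conclusion
  refine ⟨1 - b, by rw [star_sub, star_one, hb_sa], ?_, ?_⟩
  · have h1 : (1 - b) * (1 - b) = 1 - b - (b - b * b) := by noncomm_ring
    rw [h1, hbb, sub_self, sub_zero]
  · ext z
    simp only [Set.mem_setOf_eq, Set.mem_range]
    constructor
    · intro haz
      refine ⟨z, ?_⟩
      have hcz : c * z = 0 := by rw [hc, mul_assoc, haz, mul_zero]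
      have henz : ∀ n, e n * z = 0 := by
        intro n
        rw [heg n, mul_assoc, hcz, mul_zero]
      have hzez : ∀ n, star z * e n * z = 0 := by
        intro n
        rw [mul_assoc, henz n, mul_zero]
      have hSz := supOf_conj hS (fun n => (he_sa n).star_eq) he_mono z
      have hfun : (fun n => star z * e n * z) = (fun _ : ℕ => (0 : A)) :=
        funext hzez
      rw [hfun] at hSz
      have hzbz : star z * b * z = 0 := hSz.unique supOf_zero
      have hbz : b * z = 0 := by
        rw [← CStarRing.star_mul_self_eq_zero_iff (b * z), star_mul, hb_sa]
        calc star z * b * (b * z) = star z * (b * b) * z := by noncomm_ring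
          _ = star z * b * z := by rw [hbb]
          _ = 0 := hzbz
      rw [sub_mul, one_mul, hbz, sub_zero]
    · rintro ⟨w, rfl⟩
      show a * ((1 - b) * w) = 0
      have hap : a * (1 - b) = 0 := by
        rw [← CStarRing.star_mul_self_eq_zero_iff (a * (1 - b)), star_mul,
          show star ((1 : A) - b) = 1 - b by rw [star_sub, star_one, hb_sa]]
        calc (1 - b) * star a * (a * (1 - b)) = (1 - b) * (c * (1 - b)) := by
              rw [hc]; noncomm_ring
          _ = 0 := by rw [hcb, mul_zero]
      rw [← mul_assoc, hap, zero_mul]
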